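/- arXiv:2309.05584 — 3 statements merged into one kernel-verified Lean document; each statement's English description precedes it below -/
import Mathlib

section
/- Let X be a random variable taking finitely many values and α ∈ (0,1). Then min_{b ∈ ℝ} { b + (1/(1−α)) E([X − b]^+) } is attained, and the minimum value equals CVaR_α(X) := (1/(1−α)) ∫_α^1 VaR_ν(X) dν. -/
open MeasureTheory

section Aux
variable {Ω : Type*} [MeasurableSpace Ω] {μ : Measure Ω} [IsProbabilityMeasure μ]
  {X : Ω → ℝ}

lemma cvar_aux_rep (hfin : (Set.range X).Finite) (φ : ℝ → ℝ) (ω : Ω) :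
    φ (X ω) = ∑ x ∈ hfin.toFinset, ({ω' | X ω' = x}).indicator (fun _ => φ x) ω := by
  have hmem : X ω ∈ hfin.toFinset := by
    rw [Set.Finite.mem_toFinset]; exact Set.mem_range_self ω
  have : ∀ x, ({ω' | X ω' = x}).indicator (fun _ => φ x) ω = if X ω = x then φ x else 0 := by
    intro x; rw [Set.indicator_apply]; rfl
  simp_rw [this]
  rw [Finset.sum_ite_eq hfin.toFinset (X ω) φ, if_pos hmem]

lemma cvar_aux_integrable (hm : Measurable X) (hfin : (Set.range X).Finite) (φ : ℝ → ℝ) :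
    Integrable (fun ω => φ (X ω)) μ := by
  have hrep : (fun ω => φ (X ω)) =
      fun ω => ∑ x ∈ hfin.toFinset, ({ω' | X ω' = x}).indicator (fun _ => φ x) ω := by
    funext ω; exact cvar_aux_rep hfin φ ω
  rw [hrep]
  apply integrable_finset_sum
  intro x _
  exact (integrable_const (φ x)).indicator (hm (measurableSet_singleton x))

lemma cvar_aux_integral (hm : Measurable X) (hfin : (Set.range X).Finite) (φ : ℝ → ℝ) :
    ∫ ω, φ (X ω) ∂μ = ∑ x ∈ hfin.toFinset, φ x * (μ {ω' | X ω' = x}).toReal := by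
  have hrep : (fun ω => φ (X ω)) =
      fun ω => ∑ x ∈ hfin.toFinset, ({ω' | X ω' = x}).indicator (fun _ => φ x) ω := by
    funext ω; exact cvar_aux_rep hfin φ ω
  rw [hrep, integral_finset_sum]
  · refine Finset.sum_congr rfl fun x _ => ?_
    rw [show {ω' | X ω' = x} = X ⁻¹' {x} from rfl, integral_indicator_const (φ x) (hm (measurableSet_singleton x))]
    rw [smul_eq_mul, mul_comm]
    rfl
  · intro x _
    exact (integrable_const (φ x)).indicator (hm (measurableSet_singleton x))

end Aux

section Aux2
variable {Ω : Type*} [MeasurableSpace Ω] {μ : Measure Ω} [IsProbabilityMeasure μ]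
  {X : Ω → ℝ}

lemma cvar_aux_cdf_sum (hm : Measurable X) (hfin : (Set.range X).Finite) (x0 : ℝ) :
    (μ {ω | X ω ≤ x0}).toReal
      = ∑ x ∈ hfin.toFinset.filter (· ≤ x0), (μ {ω' | X ω' = x}).toReal := by
  have h1 : ∫ ω, (if X ω ≤ x0 then (1:ℝ) else 0) ∂μ = (μ {ω | X ω ≤ x0}).toReal := by
    have : (fun ω => if X ω ≤ x0 then (1:ℝ) else 0)
        = Set.indicator {ω | X ω ≤ x0} (fun _ => (1:ℝ)) := by
      funext ω; rw [Set.indicator_apply]; rfl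
    rw [this, show {ω | X ω ≤ x0} = X ⁻¹' Set.Iic x0 from rfl,
      integral_indicator_const (1:ℝ) (hm measurableSet_Iic)]
    simp
    rfl
  rw [← h1, cvar_aux_integral hm hfin (fun x => if x ≤ x0 then (1:ℝ) else 0)]
  rw [Finset.sum_filter]
  refine Finset.sum_congr rfl fun x _ => ?_
  by_cases h : x ≤ x0 <;> simp [h]

lemma cvar_aux_sum_one (hm : Measurable X) (hfin : (Set.range X).Finite) :
    ∑ x ∈ hfin.toFinset, (μ {ω' | X ω' = x}).toReal = 1 := by
  have := cvar_aux_integral (μ := μ) hm hfin (fun _ => (1:ℝ))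
  simp only [one_mul] at this
  rw [← this]
  simp

lemma cvar_aux_cdf_mono {x y : ℝ} (hxy : x ≤ y) :
    (μ {ω | X ω ≤ x}).toReal ≤ (μ {ω | X ω ≤ y}).toReal := by
  apply ENNReal.toReal_mono (measure_ne_top μ _)
  exact measure_mono (fun ω (h : X ω ≤ x) => le_trans h hxy)

end Aux2

section Aux3
variable {Ω : Type*} [MeasurableSpace Ω] {μ : Measure Ω} [IsProbabilityMeasure μ]
  {X : Ω → ℝ}

lemma cvar_aux_range_nonempty [IsProbabilityMeasure μ] (hfin : (Set.range X).Finite) :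
    hfin.toFinset.Nonempty := by
  have h : μ Set.univ ≠ 0 := by simp
  obtain ⟨ω, -⟩ := MeasureTheory.nonempty_of_measure_ne_zero h
  exact ⟨X ω, by rw [Set.Finite.mem_toFinset]; exact Set.mem_range_self ω⟩

lemma cvar_aux_le_max (hfin : (Set.range X).Finite) (ω : Ω) :
    X ω ≤ hfin.toFinset.max' (cvar_aux_range_nonempty (μ := μ) hfin) := by
  apply Finset.le_max'
  rw [Set.Finite.mem_toFinset]; exact Set.mem_range_self ω

lemma cvar_aux_cdf_max (hfin : (Set.range X).Finite) :
    (μ {ω | X ω ≤ hfin.toFinset.max' (cvar_aux_range_nonempty (μ := μ) hfin)}).toReal = 1 := by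
  have : {ω | X ω ≤ hfin.toFinset.max' (cvar_aux_range_nonempty (μ := μ) hfin)} = Set.univ := by
    ext ω; simpa using cvar_aux_le_max (μ := μ) hfin ω
  rw [this]; simp

lemma cvar_aux_adjoint (hm : Measurable X) (hfin : (Set.range X).Finite)
    {ν : ℝ} (hν0 : 0 < ν) (hν1 : ν ≤ 1) :
    sInf {x : ℝ | (μ {ω | X ω ≤ x}).toReal ≥ ν} ∈ hfin.toFinset ∧
    ∀ x, (sInf {x : ℝ | (μ {ω | X ω ≤ x}).toReal ≥ ν} ≤ x
        ↔ ν ≤ (μ {ω | X ω ≤ x}).toReal) := by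
  classical
  set S := hfin.toFinset with hS
  set F : ℝ → ℝ := fun x => (μ {ω | X ω ≤ x}).toReal with hF
  have hSne : S.Nonempty := cvar_aux_range_nonempty (μ := μ) hfin
  have hmaxmem : S.max' hSne ∈ S.filter (fun x => ν ≤ F x) := by
    rw [Finset.mem_filter]
    refine ⟨S.max'_mem hSne, ?_⟩
    have h1 : (μ {ω | X ω ≤ S.max' hSne}).toReal = 1 := cvar_aux_cdf_max (μ := μ) hfin
    show ν ≤ (μ {ω | X ω ≤ S.max' hSne}).toReal
    rw [h1]; exact hν1
  have hne : (S.filter (fun x => ν ≤ F x)).Nonempty := ⟨_, hmaxmem⟩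
  set c := (S.filter (fun x => ν ≤ F x)).min' hne with hc
  have hcS : c ∈ S := (Finset.mem_filter.mp ((S.filter _).min'_mem hne)).1
  have hcF : ν ≤ F c := (Finset.mem_filter.mp ((S.filter _).min'_mem hne)).2
  have hiff : ∀ x, (c ≤ x ↔ ν ≤ F x) := by
    intro x
    constructor
    · intro hcx
      exact le_trans hcF (cvar_aux_cdf_mono (μ := μ) hcx)
    · intro hx
      by_cases hne2 : (S.filter (· ≤ x)).Nonempty
      · set y := (S.filter (· ≤ x)).max' hne2 with hy
        have hyS : y ∈ S := (Finset.mem_filter.mp ((S.filter _).max'_mem hne2)).1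
        have hyx : y ≤ x := (Finset.mem_filter.mp ((S.filter _).max'_mem hne2)).2
        have hset : {ω | X ω ≤ x} = {ω | X ω ≤ y} := by
          ext ω
          simp only [Set.mem_setOf_eq]
          constructor
          · intro h
            apply Finset.le_max'
            rw [Finset.mem_filter]
            exact ⟨by rw [hS, Set.Finite.mem_toFinset]; exact Set.mem_range_self ω, h⟩
          · intro h; exact le_trans h hyx
        have hyF : ν ≤ F y := by rw [hF]; simp only; rw [← hset]; exact hx
        have : c ≤ y := (S.filter (fun x => ν ≤ F x)).min'_le y (Finset.mem_filter.mpr ⟨hyS, hyF⟩)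
        exact le_trans this hyx
      · exfalso
        have hempty : {ω | X ω ≤ x} = ∅ := by
          ext ω
          simp only [Set.mem_setOf_eq, Set.mem_empty_iff_false, iff_false]
          intro h
          exact hne2 ⟨X ω, Finset.mem_filter.mpr
            ⟨by rw [hS, Set.Finite.mem_toFinset]; exact Set.mem_range_self ω, h⟩⟩
        have : F x = 0 := by rw [hF]; simp only; rw [hempty]; simp
        rw [this] at hx
        exact absurd hx (not_le.mpr hν0)
  have hsetinf : {x : ℝ | F x ≥ ν} = Set.Ici c := by
    ext x
    simp only [Set.mem_setOf_eq, Set.mem_Ici, ge_iff_le]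
    exact (hiff x).symm
  have : sInf {x : ℝ | F x ≥ ν} = c := by rw [hsetinf, csInf_Ici]
  rw [show {x : ℝ | (μ {ω | X ω ≤ x}).toReal ≥ ν} = {x : ℝ | F x ≥ ν} from rfl, this]
  exact ⟨hcS, hiff⟩

end Aux3

lemma cvar_aux_const_Ioc {f : ℝ → ℝ} {a b C : ℝ} (hab : a ≤ b)
    (h : ∀ x ∈ Set.Ioc a b, f x = C) :
    IntervalIntegrable f MeasureTheory.volume a b ∧
      (∫ x in a..b, f x) = C * (b - a) := by
  have hae : ∀ᵐ x ∂(MeasureTheory.volume : Measure ℝ), x ∈ Set.uIoc a b → f x = C := by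
    filter_upwards with x hx
    rw [Set.uIoc_of_le hab] at hx
    exact h x hx
  constructor
  · refine (intervalIntegrable_const (c := C) (μ := volume)).congr_ae ?_
    rw [Filter.EventuallyEq, ae_restrict_iff' measurableSet_uIoc]
    exact Filter.Eventually.of_forall fun x hx =>
      (h x (by rwa [Set.uIoc_of_le hab] at hx)).symm
  · rw [intervalIntegral.integral_congr_ae hae, intervalIntegral.integral_const,
      smul_eq_mul, mul_comm]

/-- Rockafellar–Uryasev dual representation of `CVaR` for simple random variables:
the minimum of `b ↦ b + (1/(1-α)) E[(X-b)⁺]` over `b ∈ ℝ` is attained and equals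
`CVaR_α(X) = (1/(1-α)) ∫_α^1 VaR_ν(X) dν`. -/
theorem cvar_dual_representation {Ω : Type*} [MeasurableSpace Ω]
    (μ : Measure Ω) [IsProbabilityMeasure μ] (X : Ω → ℝ)
    (hm : Measurable X) (hfin : (Set.range X).Finite)
    (VaR : ℝ → ℝ) (hVaR : ∀ ν, VaR ν = sInf {x : ℝ | (μ {ω | X ω ≤ x}).toReal ≥ ν})
    (α : ℝ) (hα : α ∈ Set.Ioo (0 : ℝ) 1)
    (g : ℝ → ℝ) (hg : ∀ b, g b = b + (1 / (1 - α)) * ∫ ω, max (X ω - b) 0 ∂μ) :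
    ∃ b0 : ℝ, (∀ b, g b0 ≤ g b) ∧
      g b0 = (1 / (1 - α)) * (∫ ν in α..1, VaR ν) := by
  classical
  obtain ⟨hα0, hα1⟩ := hα
  have h1α : (0:ℝ) < 1 - α := by linarith
  have hadj := cvar_aux_adjoint (μ := μ) hm hfin hα0 hα1.le
  set S := hfin.toFinset with hS
  set p : ℝ → ℝ := fun x => (μ {ω' | X ω' = x}).toReal with hp
  set F : ℝ → ℝ := fun x => (μ {ω | X ω ≤ x}).toReal with hF
  set q := sInf {x : ℝ | F x ≥ α} with hq
  obtain ⟨hqS, hqadj⟩ := hadj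
  have hpnn : ∀ x, 0 ≤ p x := fun x => ENNReal.toReal_nonneg
  have hsum1 : ∑ x ∈ S, p x = 1 := cvar_aux_sum_one hm hfin
  have hcdf : ∀ x0, F x0 = ∑ x ∈ S.filter (· ≤ x0), p x := fun x0 =>
    cvar_aux_cdf_sum hm hfin x0
  have hFle1 : ∀ x, F x ≤ 1 := by
    intro x
    have : μ {ω | X ω ≤ x} ≤ 1 := prob_le_one
    simpa [hF] using ENNReal.toReal_mono (by norm_num) this
  have hFq : α ≤ F q := (hqadj q).mp le_rfl
  have hE : ∀ b, (∫ ω, max (X ω - b) 0 ∂μ) = ∑ x ∈ S, max (x - b) 0 * p x := by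
    intro b
    exact cvar_aux_integral hm hfin (fun x => max (x - b) 0)
  -- tail bounds
  have h_gt : ∑ x ∈ S.filter (fun x => q < x), p x ≤ 1 - α := by
    have hsplit := Finset.sum_filter_add_sum_filter_not S (fun x => x ≤ q) p
    have hfe : S.filter (fun x => ¬ x ≤ q) = S.filter (fun x => q < x) := by
      ext x; simp [not_le]
    rw [hfe] at hsplit
    have hcq : F q = ∑ x ∈ S.filter (fun x => x ≤ q), p x := hcdf q
    linarith
  have h_lt : ∑ x ∈ S.filter (fun x => x < q), p x ≤ α := by
    by_cases hne2 : (S.filter (fun x => x < q)).Nonempty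
    · set y0 := (S.filter (fun x => x < q)).max' hne2 with hy0
      have hy0m := (S.filter (fun x => x < q)).max'_mem hne2
      rw [Finset.mem_filter] at hy0m
      have hfeq : S.filter (fun x => x ≤ y0) = S.filter (fun x => x < q) := by
        ext x
        simp only [Finset.mem_filter]
        constructor
        · rintro ⟨hxS, hxy⟩; exact ⟨hxS, lt_of_le_of_lt hxy hy0m.2⟩
        · rintro ⟨hxS, hxq⟩
          have : x ∈ S.filter (fun x => x < q) := Finset.mem_filter.mpr ⟨hxS, hxq⟩
          exact ⟨hxS, Finset.le_max' (S.filter (fun x => x < q)) x this⟩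
      have hFy0 : F y0 = ∑ x ∈ S.filter (fun x => x < q), p x := by
        rw [hcdf y0, hfeq]
      have hnotq : ¬ α ≤ F y0 := fun h => (not_le.mpr hy0m.2) ((hqadj y0).mpr h)
      linarith
    · rw [Finset.not_nonempty_iff_eq_empty] at hne2
      rw [hne2, Finset.sum_empty]
      linarith
  have h_ge : 1 - α ≤ ∑ x ∈ S.filter (fun x => q ≤ x), p x := by
    have hsplit := Finset.sum_filter_add_sum_filter_not S (fun x => q ≤ x) p
    have hfe : S.filter (fun x => ¬ q ≤ x) = S.filter (fun x => x < q) := by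
      ext x; simp [not_le]
    rw [hfe] at hsplit
    linarith
  -- rewriting g
  have hgrw : ∀ b, g b = (1/(1-α)) * ((1-α) * b + ∑ x ∈ S, max (x - b) 0 * p x) := by
    intro b
    rw [hg b, hE b]
    field_simp
  -- minimality
  have hmin : ∀ b, g q ≤ g b := by
    intro b
    rw [hgrw q, hgrw b]
    apply mul_le_mul_of_nonneg_left ?_ (by positivity : (0:ℝ) ≤ 1/(1-α))
    rcases le_total q b with hqb | hbq
    · have hpt : ∀ x ∈ S, max (x - q) 0 * p x
          ≤ (max (x - b) 0 + (b - q) * (if q < x then (1:ℝ) else 0)) * p x := by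
        intro x _
        apply mul_le_mul_of_nonneg_right ?_ (hpnn x)
        have h1 : x - b ≤ max (x - b) 0 := le_max_left _ _
        have h2 : (0:ℝ) ≤ max (x - b) 0 := le_max_right _ _
        rcases lt_or_ge q x with h | h
        · rw [if_pos h]
          have : max (x - q) 0 = x - q := max_eq_left (by linarith)
          linarith
        · rw [if_neg (not_lt.mpr h)]
          have : max (x - q) 0 = 0 := max_eq_right (by linarith)
          linarith
      have hsum := Finset.sum_le_sum hpt
      have hexp : ∑ x ∈ S, (max (x - b) 0 + (b - q) * (if q < x then (1:ℝ) else 0)) * p x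
          = ∑ x ∈ S, max (x - b) 0 * p x
            + (b - q) * ∑ x ∈ S.filter (fun x => q < x), p x := by
        rw [Finset.mul_sum, Finset.sum_filter, ← Finset.sum_add_distrib]
        refine Finset.sum_congr rfl fun x _ => ?_
        by_cases h : q < x <;> simp [h] <;> ring
      rw [hexp] at hsum
      have hineq : (b - q) * ∑ x ∈ S.filter (fun x => q < x), p x ≤ (b - q) * (1 - α) :=
        mul_le_mul_of_nonneg_left h_gt (by linarith)
      linarith
    · have hpt : ∀ x ∈ S, (max (x - q) 0 + (q - b) * (if q ≤ x then (1:ℝ) else 0)) * p x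
          ≤ max (x - b) 0 * p x := by
        intro x _
        apply mul_le_mul_of_nonneg_right ?_ (hpnn x)
        have h1 : x - b ≤ max (x - b) 0 := le_max_left _ _
        have h2 : (0:ℝ) ≤ max (x - b) 0 := le_max_right _ _
        rcases le_or_gt q x with h | h
        · rw [if_pos h]
          have h3 : max (x - q) 0 = x - q := max_eq_left (by linarith)
          linarith
        · rw [if_neg (not_le.mpr h)]
          have : max (x - q) 0 = 0 := max_eq_right (by linarith)
          linarith
      have hsum := Finset.sum_le_sum hpt
      have hexp : ∑ x ∈ S, (max (x - q) 0 + (q - b) * (if q ≤ x then (1:ℝ) else 0)) * p x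
          = ∑ x ∈ S, max (x - q) 0 * p x
            + (q - b) * ∑ x ∈ S.filter (fun x => q ≤ x), p x := by
        rw [Finset.mul_sum, Finset.sum_filter, ← Finset.sum_add_distrib]
        refine Finset.sum_congr rfl fun x _ => ?_
        by_cases h : q ≤ x <;> simp [h] <;> ring
      rw [hexp] at hsum
      have hineq : (q - b) * (1 - α) ≤ (q - b) * ∑ x ∈ S.filter (fun x => q ≤ x), p x :=
        mul_le_mul_of_nonneg_left h_ge (by linarith)
      linarith
  -- value
  have hFmono : ∀ {x y : ℝ}, x ≤ y → F x ≤ F y := fun h => cvar_aux_cdf_mono (μ := μ) h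
  have hval : (∫ ν in α..1, VaR ν) = (1-α) * q + ∑ x ∈ S, max (x - q) 0 * p x := by
    set T := S.filter (fun x => q ≤ x) with hT
    have hqT : q ∈ T := Finset.mem_filter.mpr ⟨hqS, le_rfl⟩
    obtain ⟨m, hmcard⟩ : ∃ m, T.card = m + 1 :=
      ⟨T.card - 1, (Nat.succ_pred_eq_of_pos (Finset.card_pos.mpr ⟨q, hqT⟩)).symm⟩
    set t : Fin (m+1) → ℝ := fun j => ((T.orderIsoOfFin hmcard j : ℝ)) with ht
    have htT : ∀ j, t j ∈ T := fun j => (T.orderIsoOfFin hmcard j).2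
    have htq : ∀ j, q ≤ t j := fun j => (Finset.mem_filter.mp (htT j)).2
    have htS : ∀ j, t j ∈ S := fun j => (Finset.mem_filter.mp (htT j)).1
    have htmono : StrictMono t := fun i j hij => by
      exact_mod_cast (T.orderIsoOfFin hmcard).strictMono hij
    have htsurj : ∀ x, x ∈ T → ∃ j, t j = x := by
      intro x hx
      refine ⟨(T.orderIsoOfFin hmcard).symm ⟨x, hx⟩, ?_⟩
      show ((T.orderIsoOfFin hmcard) ((T.orderIsoOfFin hmcard).symm ⟨x, hx⟩) : ℝ) = x
      rw [OrderIso.apply_symm_apply]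
    set t' : ℕ → ℝ := fun j => t ⟨min j m, Nat.lt_succ_of_le (min_le_right j m)⟩ with ht'
    have ht'eq : ∀ (j : Fin (m+1)), t' j.val = t j := by
      intro j
      show t ⟨min j.val m, _⟩ = t j
      congr 1
      exact Fin.ext (min_eq_left (Nat.lt_succ_iff.mp j.isLt))
    have ht'T : ∀ k, t' k ∈ T := fun k => htT _
    have ht'q : ∀ k, q ≤ t' k := fun k => htq _
    have ht'S : ∀ k, t' k ∈ S := fun k => htS _
    have ht'mono : ∀ i j : ℕ, i ≤ j → t' i ≤ t' j := fun i j hij =>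
      htmono.monotone (Fin.mk_le_mk.mpr (min_le_min hij le_rfl))
    have ht'lt : ∀ a b : ℕ, a ≤ m → b ≤ m → (t' a < t' b ↔ a < b) := by
      intro a b ha hb
      show t ⟨min a m, _⟩ < t ⟨min b m, _⟩ ↔ a < b
      rw [htmono.lt_iff_lt, Fin.mk_lt_mk, min_eq_left ha, min_eq_left hb]
    have ht'surj : ∀ x, x ∈ T → ∃ n, n ≤ m ∧ t' n = x := by
      intro x hx
      obtain ⟨j, hj⟩ := htsurj x hx
      exact ⟨j.val, Nat.lt_succ_iff.mp j.isLt, (ht'eq j).trans hj⟩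
    have ht'0 : t' 0 = q := by
      obtain ⟨j, hj⟩ := htsurj q hqT
      refine le_antisymm ?_ (ht'q 0)
      rw [← hj, ← ht'eq j]
      exact ht'mono 0 j.val (Nat.zero_le _)
    have hmaxS : ∀ x, x ∈ S → x ≤ t' m := by
      intro x hx
      rcases le_total x q with h | h
      · exact le_trans h (ht'q m)
      · obtain ⟨n, hnm, hn⟩ := ht'surj x (Finset.mem_filter.mpr ⟨hx, h⟩)
        rw [← hn]
        exact ht'mono n m hnm
    have hFtm : F (t' m) = 1 := by
      have huniv : {ω | X ω ≤ t' m} = Set.univ := by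
        ext ω
        simp only [Set.mem_setOf_eq, Set.mem_univ, iff_true]
        exact hmaxS (X ω) (by rw [hS, Set.Finite.mem_toFinset]; exact Set.mem_range_self ω)
      show (μ {ω | X ω ≤ t' m}).toReal = 1
      rw [huniv]
      simp
    set c : ℕ → ℝ := fun j => if j = 0 then α else F (t' (j-1)) with hcdef
    have hc0 : c 0 = α := by simp [hcdef]
    have hcsucc : ∀ j, c (j+1) = F (t' j) := by intro j; simp [hcdef]
    have hαc : ∀ j, α ≤ c j := by
      intro j
      cases j with
      | zero => rw [hc0]
      | succ i =>
        rw [hcsucc i]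
        refine le_trans hFq (hFmono ?_)
        exact ht'q i
    have hclast : c (m+1) = 1 := by rw [hcsucc m]; exact hFtm
    have hcm : ∀ j, j ≤ m → c j ≤ c (j+1) := by
      intro j hj
      cases j with
      | zero =>
        rw [hc0, hcsucc 0, ht'0]
        exact hFq
      | succ i =>
        rw [hcsucc i, hcsucc (i+1)]
        exact hFmono (ht'mono i (i+1) (Nat.le_succ i))
    have hstep : ∀ j, j ≤ m → ∀ ν ∈ Set.Ioc (c j) (c (j+1)), VaR ν = t' j := by
      intro j hj ν hν
      obtain ⟨hν1, hν2⟩ := hν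
      have hαν : α < ν := lt_of_le_of_lt (hαc j) hν1
      have hν0 : 0 < ν := lt_trans hα0 hαν
      have hν1' : ν ≤ 1 := by
        have h2 : c (j+1) = F (t' j) := hcsucc j
        have h3 := hFle1 (t' j)
        linarith
      obtain ⟨hvS, hvadj⟩ := cvar_aux_adjoint (μ := μ) hm hfin hν0 hν1'
      rw [hVaR ν]
      set v := sInf {x : ℝ | (μ {ω | X ω ≤ x}).toReal ≥ ν} with hv
      have hvle : v ≤ t' j := by
        apply (hvadj (t' j)).mpr
        have h3 : ν ≤ F (t' j) := by rw [← hcsucc j]; exact hν2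
        exact h3
      have hqv : q ≤ v := by
        apply (hqadj v).mpr
        exact le_trans hαν.le ((hvadj v).mp le_rfl)
      cases j with
      | zero =>
        refine le_antisymm hvle ?_
        rw [ht'0]
        exact hqv
      | succ i =>
        have him : i ≤ m := by omega
        have hnle : t' i < v := by
          by_contra hcon
          push_neg at hcon
          have h4 : ν ≤ F (t' i) := (hvadj (t' i)).mp hcon
          have h5 : c (i+1) = F (t' i) := hcsucc i
          linarith
        have hvT : v ∈ T := by
          refine Finset.mem_filter.mpr ⟨?_, hqv⟩
          exact hvS
        obtain ⟨n, hnm, hn⟩ := ht'surj v hvT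
        have h6 : t' i < t' n := by rw [hn]; exact hnle
        have h7 : t' n ≤ t' (i+1) := by rw [hn]; exact hvle
        have h8 : i < n := (ht'lt i n him hnm).mp h6
        have h9 : ¬ (i+1) < n := by
          intro hcon
          exact absurd ((ht'lt (i+1) n hj hnm).mpr hcon) (not_lt.mpr h7)
        have h10 : n = i + 1 := by omega
        rw [← hn, h10]
    have hIIval : ∀ k, k ≤ m → IntervalIntegrable VaR MeasureTheory.volume (c k) (c (k+1)) ∧
        (∫ ν in (c k)..(c (k+1)), VaR ν) = t' k * (c (k+1) - c k) :=
      fun k hk => cvar_aux_const_Ioc (hcm k hk) (hstep k hk)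
    have hsum := intervalIntegral.sum_integral_adjacent_intervals
      (μ := MeasureTheory.volume) (f := VaR) (a := c) (n := m+1)
      (fun k hk => (hIIval k (Nat.lt_succ_iff.mp hk)).1)
    have hdelta : ∀ k, 1 ≤ k → k ≤ m → c (k+1) - c k = p (t' k) := by
      intro k h1k hkm
      obtain ⟨i, rfl⟩ : ∃ i, k = i + 1 := ⟨k - 1, by omega⟩
      have him : i ≤ m := by omega
      have hins : S.filter (fun x => x ≤ t' (i+1))
          = insert (t' (i+1)) (S.filter (fun x => x ≤ t' i)) := by
        ext x
        simp only [Finset.mem_filter, Finset.mem_insert]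
        constructor
        · rintro ⟨hxS, hxle⟩
          rcases eq_or_lt_of_le hxle with h | h
          · exact Or.inl h
          · right
            refine ⟨hxS, ?_⟩
            by_contra hgt
            push_neg at hgt
            have hxT : x ∈ T := Finset.mem_filter.mpr ⟨hxS, le_trans (ht'q i) hgt.le⟩
            obtain ⟨n, hnm, hn⟩ := ht'surj x hxT
            have hb1 : i < n := (ht'lt i n him hnm).mp (by rw [hn]; exact hgt)
            have hb2 : n < i + 1 := (ht'lt n (i+1) hnm hkm).mp (by rw [hn]; exact h)
            omega
        · rintro (rfl | ⟨hxS, hxle⟩)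
          · exact ⟨ht'S (i+1), le_rfl⟩
          · exact ⟨hxS, le_trans hxle (ht'mono i (i+1) (Nat.le_succ i))⟩
      have hnotmem : t' (i+1) ∉ S.filter (fun x => x ≤ t' i) := by
        rw [Finset.mem_filter]
        rintro ⟨-, hle⟩
        have : t' i < t' (i+1) := (ht'lt i (i+1) him hkm).mpr (Nat.lt_succ_self i)
        linarith
      have e1 : F (t' (i+1)) = p (t' (i+1)) + ∑ x ∈ S.filter (fun x => x ≤ t' i), p x := by
        rw [hcdf (t' (i+1))]
        rw [show (S.filter (· ≤ t' (i+1))) = S.filter (fun x => x ≤ t' (i+1)) from rfl]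
        rw [hins, Finset.sum_insert hnotmem]
      have e2 : F (t' i) = ∑ x ∈ S.filter (fun x => x ≤ t' i), p x := hcdf (t' i)
      rw [hcsucc (i+1), hcsucc i, e1, e2]
      ring
    have hterm : ∀ k ∈ Finset.range (m+1),
        (t' k - q) * (c (k+1) - c k) = (t' k - q) * p (t' k) := by
      intro k hk
      rcases Nat.eq_zero_or_pos k with rfl | hpos
      · rw [ht'0]; ring
      · rw [hdelta k hpos (Nat.lt_succ_iff.mp (Finset.mem_range.mp hk))]
    have hsplitsum : ∑ k ∈ Finset.range (m+1), t' k * (c (k+1) - c k)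
        = q * (c (m+1) - c 0) + ∑ k ∈ Finset.range (m+1), (t' k - q) * (c (k+1) - c k) := by
      rw [← Finset.sum_range_sub c (m+1), Finset.mul_sum, ← Finset.sum_add_distrib]
      exact Finset.sum_congr rfl fun k _ => by ring
    have hfin2 : ∑ k ∈ Finset.range (m+1), (t' k - q) * p (t' k)
        = ∑ x ∈ T, (x - q) * p x := by
      rw [← Finset.sum_coe_sort T (fun x => (x - q) * p x)]
      rw [← Fin.sum_univ_eq_sum_range (fun k => (t' k - q) * p (t' k)) (m+1)]
      refine Fintype.sum_equiv (T.orderIsoOfFin hmcard).toEquiv _ _ fun j => ?_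
      rw [ht'eq j]
      rfl
    have hfin3 : ∑ x ∈ T, (x - q) * p x = ∑ x ∈ S, max (x - q) 0 * p x := by
      rw [hT, Finset.sum_filter]
      refine Finset.sum_congr rfl fun x _ => ?_
      rcases le_or_gt q x with h | h
      · rw [if_pos h, max_eq_left (by linarith)]
      · rw [if_neg (not_le.mpr h), max_eq_right (by linarith), zero_mul]
    calc (∫ ν in α..1, VaR ν) = ∫ ν in (c 0)..(c (m+1)), VaR ν := by rw [hc0, hclast]
      _ = ∑ k ∈ Finset.range (m+1), ∫ ν in (c k)..(c (k+1)), VaR ν := hsum.symm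
      _ = ∑ k ∈ Finset.range (m+1), t' k * (c (k+1) - c k) :=
          Finset.sum_congr rfl fun k hk =>
            (hIIval k (Nat.lt_succ_iff.mp (Finset.mem_range.mp hk))).2
      _ = q * (c (m+1) - c 0) + ∑ k ∈ Finset.range (m+1), (t' k - q) * (c (k+1) - c k) :=
          hsplitsum
      _ = q * (1 - α) + ∑ k ∈ Finset.range (m+1), (t' k - q) * p (t' k) := by
          rw [hclast, hc0, Finset.sum_congr rfl hterm]
      _ = (1-α) * q + ∑ x ∈ S, max (x - q) 0 * p x := by rw [hfin2, hfin3]; ring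
  refine ⟨q, hmin, ?_⟩
  rw [hgrw q, hval]
end

section
/- Let X be a bounded random variable, α ∈ (0,1), and g(b) := b + (1/(1−α)) E([X − b]^+). Then b* := VaR_α(X) is a minimizer of g over ℝ. -/
open MeasureTheory Filter Topology

/-- `b* = VaR_α(X)` minimizes the Rockafellar–Uryasev dual objective
`g b = b + (1/(1-α)) E[(X-b)⁺]` over `ℝ`, for a bounded random variable `X`. -/
theorem var_minimizes_cvar_dual {Ω : Type*} [MeasurableSpace Ω]
    (μ : Measure Ω) [IsProbabilityMeasure μ] (X : Ω → ℝ)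
    (hm : Measurable X) (hX : ∃ C, ∀ ω, |X ω| ≤ C)
    (α : ℝ) (hα : α ∈ Set.Ioo (0 : ℝ) 1)
    (g : ℝ → ℝ) (hg : ∀ b, g b = b + (1 / (1 - α)) * ∫ ω, max (X ω - b) 0 ∂μ) :
    ∀ b : ℝ, g (sInf {x : ℝ | (μ {ω | X ω ≤ x}).toReal ≥ α}) ≤ g b := by
  obtain ⟨hα0, hα1⟩ := hα
  obtain ⟨C, hC⟩ := hX
  have h1α : (0:ℝ) < 1 - α := by linarith
  set S : Set ℝ := {x : ℝ | (μ {ω | X ω ≤ x}).toReal ≥ α} with hSdef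
  set b' : ℝ := sInf S with hb'
  have hmeasle : ∀ c : ℝ, MeasurableSet {ω | X ω ≤ c} := fun c => hm measurableSet_Iic
  -- S is nonempty
  have hne : S.Nonempty := by
    refine ⟨C, ?_⟩
    have huniv : {ω | X ω ≤ C} = Set.univ :=
      Set.eq_univ_of_forall fun ω => (abs_le.1 (hC ω)).2
    show α ≤ (μ {ω | X ω ≤ C}).toReal
    rw [huniv, measure_univ, ENNReal.toReal_one]
    linarith
  -- S is bounded below
  have hbdd : BddBelow S := by
    refine ⟨-C - 1, fun x hx => ?_⟩
    by_contra hcon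
    push_neg at hcon
    have hemp : {ω | X ω ≤ x} = ∅ := by
      ext ω
      simp only [Set.mem_setOf_eq, Set.mem_empty_iff_false, iff_false, not_le]
      have := (abs_le.1 (hC ω)).1
      linarith
    have hx' : α ≤ (μ {ω | X ω ≤ x}).toReal := hx
    rw [hemp, measure_empty] at hx'
    simp at hx'
    linarith
  -- Fact A : α ≤ F(b')
  have hAset : ∀ n : ℕ, α ≤ (μ {ω | X ω ≤ b' + 1/((n:ℝ)+1)}).toReal := by
    intro n
    have hpos : (0:ℝ) < 1/((n:ℝ)+1) := by positivity
    have hlt : sInf S < b' + 1/((n:ℝ)+1) := by rw [← hb']; linarith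
    obtain ⟨s, hsS, hs⟩ := (csInf_lt_iff hbdd hne).1 hlt
    have hsub : {ω | X ω ≤ s} ⊆ {ω | X ω ≤ b' + 1/((n:ℝ)+1)} :=
      fun ω hω => le_trans hω hs.le
    exact le_trans hsS (ENNReal.toReal_mono (measure_ne_top μ _) (measure_mono hsub))
  have hanti : Antitone (fun n : ℕ => {ω | X ω ≤ b' + 1/((n:ℝ)+1)}) := by
    intro m n hmn ω hω
    simp only [Set.mem_setOf_eq] at *
    have hmn' : (m:ℝ) + 1 ≤ (n:ℝ) + 1 := by exact_mod_cast by omega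
    have : (1:ℝ)/((n:ℝ)+1) ≤ 1/((m:ℝ)+1) :=
      one_div_le_one_div_of_le (by positivity) hmn'
    linarith
  have hiInter : ⋂ n : ℕ, {ω | X ω ≤ b' + 1/((n:ℝ)+1)} = {ω | X ω ≤ b'} := by
    ext ω
    simp only [Set.mem_iInter, Set.mem_setOf_eq]
    constructor
    · intro h
      have ht : Tendsto (fun n : ℕ => b' + 1/((n:ℝ)+1)) atTop (𝓝 (b' + 0)) :=
        tendsto_const_nhds.add tendsto_one_div_add_atTop_nhds_zero_nat
      rw [add_zero] at ht
      exact ge_of_tendsto' ht h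
    · intro h n
      have : (0:ℝ) < 1/((n:ℝ)+1) := by positivity
      linarith
  have htendA := tendsto_measure_iInter_atTop (μ := μ)
    (fun n => (hmeasle _).nullMeasurableSet) hanti ⟨0, measure_ne_top μ _⟩
  rw [hiInter] at htendA
  have hA' : ENNReal.ofReal α ≤ μ {ω | X ω ≤ b'} := by
    refine ge_of_tendsto' htendA fun n => ?_
    calc ENNReal.ofReal α ≤ ENNReal.ofReal ((μ {ω | X ω ≤ b' + 1/((n:ℝ)+1)}).toReal) :=
          ENNReal.ofReal_le_ofReal (hAset n)
      _ = μ {ω | X ω ≤ b' + 1/((n:ℝ)+1)} := ENNReal.ofReal_toReal (measure_ne_top μ _)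
  have hA : α ≤ (μ {ω | X ω ≤ b'}).toReal := by
    have := ENNReal.toReal_mono (measure_ne_top μ _) hA'
    rwa [ENNReal.toReal_ofReal hα0.le] at this
  -- Fact B : P(X < b') ≤ α
  have hBset : ∀ n : ℕ, μ {ω | X ω ≤ b' - 1/((n:ℝ)+1)} ≤ ENNReal.ofReal α := by
    intro n
    have hpos : (0:ℝ) < 1/((n:ℝ)+1) := by positivity
    have hnotmem : b' - 1/((n:ℝ)+1) ∉ S := by
      intro hmem
      have := csInf_le hbdd hmem
      rw [← hb'] at this
      linarith
    have hlt : (μ {ω | X ω ≤ b' - 1/((n:ℝ)+1)}).toReal < α := by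
      by_contra hcon
      exact hnotmem (le_of_not_gt hcon)
    calc μ {ω | X ω ≤ b' - 1/((n:ℝ)+1)}
        = ENNReal.ofReal ((μ {ω | X ω ≤ b' - 1/((n:ℝ)+1)}).toReal) :=
          (ENNReal.ofReal_toReal (measure_ne_top μ _)).symm
      _ ≤ ENNReal.ofReal α := ENNReal.ofReal_le_ofReal hlt.le
  have hmonoB : Monotone (fun n : ℕ => {ω | X ω ≤ b' - 1/((n:ℝ)+1)}) := by
    intro m n hmn ω hω
    simp only [Set.mem_setOf_eq] at *
    have hmn' : (m:ℝ) + 1 ≤ (n:ℝ) + 1 := by exact_mod_cast by omega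
    have : (1:ℝ)/((n:ℝ)+1) ≤ 1/((m:ℝ)+1) :=
      one_div_le_one_div_of_le (by positivity) hmn'
    linarith
  have hiUnion : ⋃ n : ℕ, {ω | X ω ≤ b' - 1/((n:ℝ)+1)} = {ω | X ω < b'} := by
    ext ω
    simp only [Set.mem_iUnion, Set.mem_setOf_eq]
    constructor
    · rintro ⟨n, h⟩
      have : (0:ℝ) < 1/((n:ℝ)+1) := by positivity
      linarith
    · intro h
      obtain ⟨n, hn⟩ := exists_nat_one_div_lt (sub_pos.2 h)
      exact ⟨n, by linarith⟩
  have htendB := tendsto_measure_iUnion_atTop (μ := μ) hmonoB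
  rw [hiUnion] at htendB
  have hB' : μ {ω | X ω < b'} ≤ ENNReal.ofReal α := le_of_tendsto' htendB hBset
  have hB : (μ {ω | X ω < b'}).toReal ≤ α :=
    ENNReal.toReal_le_of_le_ofReal hα0.le hB'
  -- integrability of positive parts
  have hint : ∀ c : ℝ, Integrable (fun ω => max (X ω - c) 0) μ := by
    intro c
    refine Integrable.mono' (integrable_const (C + |c|))
      (((hm.sub measurable_const).max measurable_const).aestronglyMeasurable)
      (Eventually.of_forall fun ω => ?_)
    rw [Real.norm_eq_abs, abs_of_nonneg (le_max_right _ 0)]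
    have h1 := (abs_le.1 (hC ω)).2
    have h2 := (abs_le.1 (hC ω)).1
    have h3 := neg_abs_le c
    have h4 := abs_nonneg (X ω)
    have h5 := abs_le.1 (hC ω)
    refine max_le (by linarith) ?_
    have : (0:ℝ) ≤ C := le_trans (abs_nonneg _) (hC ω)
    positivity
  -- complement measure computation
  have hcompl : ∀ s : Set Ω, MeasurableSet s → (μ sᶜ).toReal = 1 - (μ s).toReal := by
    intro s hs
    rw [measure_compl hs (measure_ne_top μ _), measure_univ,
      ENNReal.toReal_sub_of_le prob_le_one ENNReal.one_ne_top, ENNReal.toReal_one]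
  intro b
  rw [hg b, hg b']
  rcases le_total b' b with hle | hle
  · -- case b' ≤ b
    have hkey : -((b - b') * (μ {ω | X ω ≤ b'}ᶜ).toReal)
        ≤ (∫ ω, max (X ω - b) 0 ∂μ) - ∫ ω, max (X ω - b') 0 ∂μ := by
      have hι : ∫ ω, ({ω | X ω ≤ b'}ᶜ).indicator (fun _ => -(b - b')) ω ∂μ
          = (μ {ω | X ω ≤ b'}ᶜ).toReal * (-(b - b')) := by
        rw [integral_indicator_const _ (hmeasle b').compl, smul_eq_mul]; rfl
      have hptwise : ∀ ω, ({ω | X ω ≤ b'}ᶜ).indicator (fun _ => -(b - b')) ω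
          ≤ max (X ω - b) 0 - max (X ω - b') 0 := by
        intro ω
        by_cases hω : ω ∈ {ω | X ω ≤ b'}ᶜ
        · rw [Set.indicator_of_mem hω]
          simp only [Set.mem_compl_iff, Set.mem_setOf_eq, not_le] at hω
          have h1 : max (X ω - b') 0 = X ω - b' := max_eq_left (by linarith)
          have h2 : X ω - b ≤ max (X ω - b) 0 := le_max_left _ _
          rw [h1]; linarith
        · rw [Set.indicator_of_notMem hω]
          simp only [Set.mem_compl_iff, Set.mem_setOf_eq, not_not] at hω
          have h1 : max (X ω - b') 0 = 0 := max_eq_right (by linarith)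
          have h2 : max (X ω - b) 0 = 0 := max_eq_right (by linarith)
          rw [h1, h2]; norm_num
      have hmono := integral_mono
        ((integrable_const (-(b - b'))).indicator (hmeasle b').compl)
        ((hint b).sub (hint b')) hptwise
      simp only [Pi.sub_apply] at hmono
      rw [hι, integral_sub (hint b) (hint b')] at hmono
      linarith
    have hple : (μ {ω | X ω ≤ b'}ᶜ).toReal ≤ 1 - α := by
      rw [hcompl _ (hmeasle b')]; linarith
    have hd : (b' - b) * (1 - α)
        ≤ (∫ ω, max (X ω - b) 0 ∂μ) - ∫ ω, max (X ω - b') 0 ∂μ := by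
      nlinarith [mul_nonneg (sub_nonneg.2 hle) (sub_nonneg.2 hple),
        (μ {ω | X ω ≤ b'}ᶜ).toReal_nonneg]
    have h5 := mul_le_mul_of_nonneg_left hd (by positivity : (0:ℝ) ≤ 1/(1-α))
    have h6 : (1/(1-α)) * ((b' - b) * (1 - α)) = b' - b := by
      field_simp
    rw [mul_sub] at h5
    linarith
  · -- case b ≤ b'
    have hsets : {ω | b' ≤ X ω} = {ω | X ω < b'}ᶜ := by
      ext ω; simp [not_lt]
    have hmeasge : MeasurableSet {ω | b' ≤ X ω} := hm measurableSet_Ici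
    have hkey : (b' - b) * (μ {ω | b' ≤ X ω}).toReal
        ≤ (∫ ω, max (X ω - b) 0 ∂μ) - ∫ ω, max (X ω - b') 0 ∂μ := by
      have hι : ∫ ω, ({ω | b' ≤ X ω}).indicator (fun _ => b' - b) ω ∂μ
          = (μ {ω | b' ≤ X ω}).toReal * (b' - b) := by
        rw [integral_indicator_const _ hmeasge, smul_eq_mul]; rfl
      have hptwise : ∀ ω, ({ω | b' ≤ X ω}).indicator (fun _ => b' - b) ω
          ≤ max (X ω - b) 0 - max (X ω - b') 0 := by
        intro ω
        by_cases hω : ω ∈ {ω | b' ≤ X ω}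
        · rw [Set.indicator_of_mem hω]
          simp only [Set.mem_setOf_eq] at hω
          have h1 : max (X ω - b') 0 = X ω - b' := max_eq_left (by linarith)
          have h2 : max (X ω - b) 0 = X ω - b := max_eq_left (by linarith)
          rw [h1, h2]; linarith
        · rw [Set.indicator_of_notMem hω]
          simp only [Set.mem_setOf_eq, not_le] at hω
          have h1 : max (X ω - b') 0 = 0 := max_eq_right (by linarith)
          have h2 : (0:ℝ) ≤ max (X ω - b) 0 := le_max_right _ _
          rw [h1]; linarith
      have hmono := integral_mono
        ((integrable_const (b' - b)).indicator hmeasge)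
        ((hint b).sub (hint b')) hptwise
      simp only [Pi.sub_apply] at hmono
      rw [hι, integral_sub (hint b) (hint b')] at hmono
      linarith
    have hq : 1 - α ≤ (μ {ω | b' ≤ X ω}).toReal := by
      rw [hsets, hcompl {ω | X ω < b'} (hm measurableSet_Iio)]
      linarith
    have hd : (b' - b) * (1 - α)
        ≤ (∫ ω, max (X ω - b) 0 ∂μ) - ∫ ω, max (X ω - b') 0 ∂μ := by
      nlinarith [mul_nonneg (sub_nonneg.2 hle) (sub_nonneg.2 hq)]
    have h5 := mul_le_mul_of_nonneg_left hd (by positivity : (0:ℝ) ≤ 1/(1-α))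
    have h6 : (1/(1-α)) * ((b' - b) * (1 - α)) = b' - b := by
      field_simp
    rw [mul_sub] at h5
    linarith
end

section
/- Fix α ∈ (0,1) and a finite set Π of bounded random variables. For ς > 0 define approximate values v_ς(X) := min_{b ∈ B_ς} { b + (1/(1−α)) E([X − b]^+) }, where B_ς := {Vmin + kς : k ∈ ℕ, Vmin + kς ≤ Vmax} and all X ∈ Π take values in [Vmin, Vmax]. Then for every X ∈ Π, 0 ≤ v_ς(X) − CVaR_α(X) ≤ ς · max(1, α/(1−α)); hence as ς → 0, the minimizer over Π of v_ς converges to achieving the minimum of CVaR_α over Π up to O(ς). -/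
open MeasureTheory

/-- Slack-variable discretization error for risk-sensitive DVI (Lemma 2
abstraction): for each bounded random variable `X` in a finite set `P`, the
approximate value `v_ς(X)`, obtained by minimizing the dual CVaR objective
`g X b = b + (1/(1-α)) E[(X-b)⁺]` over the finite grid
`B_ς = {Vmin + kς : k ∈ ℕ, Vmin + kς ≤ Vmax}`, overestimates `CVaR_α(X)` by at
most `ς · max 1 (α/(1-α))`. Here the dual representation of `CVaR` is assumed:
the minimum of `g X` over `ℝ` is attained at some `b* ∈ [Vmin, Vmax]` and equals
`CVaR_α(X)`. -/
theorem grid_cvar_error {Ω : Type*} [MeasurableSpace Ω]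
    (μ : Measure Ω) [IsProbabilityMeasure μ]
    (α : ℝ) (hα : α ∈ Set.Ioo (0 : ℝ) 1)
    (Vmin Vmax ς : ℝ) (hV : Vmin ≤ Vmax) (hς : 0 < ς)
    (P : Set (Ω → ℝ)) (hPfin : P.Finite)
    (hmeas : ∀ X ∈ P, Measurable X)
    (hbound : ∀ X ∈ P, ∀ ω, X ω ∈ Set.Icc Vmin Vmax)
    (g : (Ω → ℝ) → ℝ → ℝ)
    (hg : ∀ X b, g X b = b + (1 / (1 - α)) * ∫ ω, max (X ω - b) 0 ∂μ)
    (CVaR : (Ω → ℝ) → ℝ)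
    (hdual : ∀ X ∈ P, ∃ b ∈ Set.Icc Vmin Vmax,
        g X b = CVaR X ∧ ∀ b' : ℝ, g X b ≤ g X b')
    (v : (Ω → ℝ) → ℝ)
    (hv : ∀ X, v X = sInf (g X '' {b : ℝ | ∃ k : ℕ, b = Vmin + k * ς ∧ b ≤ Vmax})) :
    ∀ X ∈ P, 0 ≤ v X - CVaR X ∧ v X - CVaR X ≤ ς * max 1 (α / (1 - α)) := by
  intro X hX
  obtain ⟨b₀, hb₀, hgb₀, hmin⟩ := hdual X hX
  have hα1 : 0 < 1 - α := by linarith [hα.2]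
  have hc : (1:ℝ) ≤ 1 / (1 - α) := by
    rw [le_div_iff₀ hα1]; linarith [hα.1]
  have hc' : 1 / (1 - α) - 1 = α / (1 - α) := by field_simp; ring
  have hSne : (Vmin : ℝ) ∈ {b : ℝ | ∃ k : ℕ, b = Vmin + k * ς ∧ b ≤ Vmax} :=
    ⟨0, by simp, hV⟩
  have hlow : ∀ b, CVaR X ≤ g X b := fun b => hgb₀ ▸ hmin b
  have hvge : CVaR X ≤ v X := by
    rw [hv]
    exact le_csInf ⟨g X Vmin, Set.mem_image_of_mem _ hSne⟩
      (by rintro _ ⟨b, hb, rfl⟩; exact hlow b)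
  -- choose grid point just below b₀
  set t := (b₀ - Vmin) / ς with ht
  have ht0 : 0 ≤ t := div_nonneg (by linarith [hb₀.1]) hς.le
  set k : ℕ := ⌊t⌋.toNat with hkdef
  have hk : (k : ℝ) = ⌊t⌋ := by
    exact_mod_cast Int.toNat_of_nonneg (Int.floor_nonneg.2 ht0)
  set b' := Vmin + k * ς with hb'def
  have htς : t * ς = b₀ - Vmin := by rw [ht]; field_simp
  have hb'le : b' ≤ b₀ := by
    have : (k : ℝ) * ς ≤ t * ς :=
      mul_le_mul_of_nonneg_right (hk ▸ Int.floor_le t) hς.le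
    rw [htς] at this; rw [hb'def]; linarith
  have hgap : b₀ - b' ≤ ς := by
    have h1 : t - 1 ≤ (k : ℝ) := by rw [hk]; linarith [Int.sub_one_lt_floor t]
    have : (t - 1) * ς ≤ (k : ℝ) * ς := mul_le_mul_of_nonneg_right h1 hς.le
    rw [sub_mul, htς, one_mul] at this
    rw [hb'def]; linarith
  have hgap0 : 0 ≤ b₀ - b' := by linarith
  have hb'mem : b' ∈ {b : ℝ | ∃ k : ℕ, b = Vmin + k * ς ∧ b ≤ Vmax} :=
    ⟨k, rfl, le_trans hb'le hb₀.2⟩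
  -- integrability
  have hint : ∀ b : ℝ, Integrable (fun ω => max (X ω - b) 0) μ := by
    intro b
    apply Integrable.mono' (integrable_const (max (Vmax - b) 0))
    · exact (((hmeas X hX).sub measurable_const).max measurable_const).aestronglyMeasurable
    · filter_upwards with ω
      rw [Real.norm_eq_abs, abs_of_nonneg (le_max_right _ _)]
      exact max_le_max (by linarith [(hbound X hX ω).2]) le_rfl
  -- pointwise Lipschitz bound
  have hptw : ∀ ω, max (X ω - b') 0 ≤ max (X ω - b₀) 0 + (b₀ - b') := by
    intro ω
    refine max_le ?_ ?_
    · have : X ω - b' = (X ω - b₀) + (b₀ - b') := by ring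
      rw [this]
      exact add_le_add_left (le_max_left _ _) _
    · have := le_max_right (X ω - b₀) 0
      linarith
  have hintle : ∫ ω, max (X ω - b') 0 ∂μ ≤ (∫ ω, max (X ω - b₀) 0 ∂μ) + (b₀ - b') := by
    have := integral_mono (hint b') ((hint b₀).add (integrable_const (b₀ - b'))) hptw
    simpa [integral_add (hint b₀) (integrable_const _)] using this
  have hgle : g X b' ≤ g X b₀ + (1 / (1 - α) - 1) * (b₀ - b') := by
    rw [hg, hg]
    have h2 : (1 / (1 - α)) * ∫ ω, max (X ω - b') 0 ∂μ ≤
        (1 / (1 - α)) * ((∫ ω, max (X ω - b₀) 0 ∂μ) + (b₀ - b')) :=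
      mul_le_mul_of_nonneg_left hintle (by linarith)
    nlinarith
  have hvle : v X ≤ g X b' := by
    rw [hv]
    exact csInf_le ⟨CVaR X, by rintro _ ⟨b, hb, rfl⟩; exact hlow b⟩
      (Set.mem_image_of_mem _ hb'mem)
  constructor
  · linarith
  · have h3 : (1 / (1 - α) - 1) * (b₀ - b') ≤ max 1 (α / (1 - α)) * ς := by
      rw [hc']
      apply mul_le_mul (le_max_right _ _) hgap hgap0
      positivity
    have := hvle.trans hgle
    rw [mul_comm ς]
    linarith [hgb₀ ▸ le_refl (g X b₀)]
end
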